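/- Let (X, 𝒳, μ, T) be an ergodic measure-preserving system with μ non-atomic, let γ ∈ (0,1], and let (𝒫⁽ⁿ⁾)ₙ∈ℕ be a sequence of Kakutani–Rokhlin partitions of (X, 𝒳, μ, T) satisfying (KR1)–(KR4), with d⁽ⁿ⁾ towers at level n. If there exists a sequence (w(n))ₙ∈ℕ of complete words, where w(n) is a complete word over {1,…,d⁽ⁿ⁾}, such that limsup_{n→∞} μ(𝒯⁽ⁿ⁾_{w(n)}) ≥ γ, then (X, 𝒳, μ, T) is γ-rigid. -/

import Mathlib

open MeasureTheory Filter Set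

section Rigidity

variable {X : Type*} [MeasurableSpace X]

/-- The system `(X, μ, T)` is `γ`-rigid along the increasing sequence `n` of positive
integers: `liminf_k μ(A ∩ T^{-n_k} A) ≥ γ μ(A)` for every measurable set `A`. -/
def IsPartiallyRigidSeq (μ : Measure X) (T : X → X) (γ : ℝ) (n : ℕ → ℕ) : Prop :=
  StrictMono n ∧ 0 < n 0 ∧
    ∀ A : Set X, MeasurableSet A →
      ENNReal.ofReal γ * μ A ≤ Filter.liminf (fun k => μ (A ∩ T^[n k] ⁻¹' A)) Filter.atTop

/-- The system `(X, μ, T)` is `γ`-rigid. -/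
def IsPartiallyRigid (μ : Measure X) (T : X → X) (γ : ℝ) : Prop :=
  ∃ n : ℕ → ℕ, IsPartiallyRigidSeq μ T γ n

/-- The partial rigidity rate `δ_μ`: the supremum of the constants `γ ∈ (0,1]` for which
the system is `γ`-rigid (`0`, by convention on `sSup ∅`, if the system is not partially
rigid). -/
noncomputable def partialRigidityRate (μ : Measure X) (T : X → X) : ℝ :=
  sSup {γ : ℝ | γ ∈ Set.Ioc (0 : ℝ) 1 ∧ IsPartiallyRigid μ T γ}

end Rigidity

/-- A word is complete if it has length at least 2 and its first and last letters
coincide. -/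
def IsCompleteWord {α : Type*} (w : List α) : Prop :=
  2 ≤ w.length ∧ w.head? = w.getLast?

/-- A Kakutani–Rokhlin partition of `X` for the transformation `T`: towers indexed by
`Fin d`, with measurable bases `B a` and heights `h a`; the floors `T^j(B a)`,
`0 ≤ j < h a`, are pairwise disjoint and cover `X`. -/
structure KRPartition (X : Type*) [MeasurableSpace X] (T : X → X) where
  d : ℕ
  B : Fin d → Set X
  h : Fin d → ℕ
  h_pos : ∀ a, 0 < h a
  meas : ∀ a, MeasurableSet (B a)
  disj : ∀ (a a' : Fin d) (j j' : ℕ), j < h a → j' < h a' →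
    (a, j) ≠ (a', j') → Disjoint (T^[j] '' B a) (T^[j'] '' B a')
  cover : (⋃ a : Fin d, ⋃ j ∈ Finset.range (h a), T^[j] '' B a) = Set.univ

namespace KRPartition

variable {X : Type*} [MeasurableSpace X] {T : X → X}

/-- The base `B = ⋃ₐ Bₐ` of the partition. -/
def base (P : KRPartition X T) : Set X := ⋃ a, P.B a

/-- The tower `𝒯ₐ = ⋃_{0 ≤ j < hₐ} T^j(Bₐ)`. -/
def tower (P : KRPartition X T) (a : Fin P.d) : Set X :=
  ⋃ j ∈ Finset.range (P.h a), T^[j] '' P.B a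

/-- The atoms of the partition are the floors `T^j(Bₐ)`, `0 ≤ j < hₐ`. -/
def IsAtom (P : KRPartition X T) (s : Set X) : Prop :=
  ∃ (a : Fin P.d) (j : ℕ), j < P.h a ∧ s = T^[j] '' P.B a

/-- `B_w` for a word `w`: points `x` with `T^{h_{w₁}+⋯+h_{w_{i-1}}} x ∈ B_{w_i}` for
every `1 ≤ i ≤ |w|`. -/
def wordBase (P : KRPartition X T) (w : List (Fin P.d)) : Set X :=
  {x | ∀ i : Fin w.length, T^[((w.take i).map P.h).sum] x ∈ P.B (w.get i)}

/-- The subtower `𝒯_w = ⋃_{0 ≤ j < h_{w₁}} T^j(B_w)` generated by the word `w`. -/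
def wordTower (P : KRPartition X T) (w : List (Fin P.d)) : Set X :=
  ⋃ j ∈ Finset.range ((w.map P.h).headD 0), T^[j] '' P.wordBase w

/-- The sum `h_{w₁} + ⋯ + h_{w_{ℓ-1}}` of the heights of all but the last letter. -/
def wordSum (P : KRPartition X T) (w : List (Fin P.d)) : ℕ :=
  (w.dropLast.map P.h).sum

/-- The union `𝒯_{[w]} = ⋃_{u ∼ w} 𝒯_u` over all complete words `u` equivalent to
`w` (same sum of heights of all but the last letter). -/
def classTower (P : KRPartition X T) (w : List (Fin P.d)) : Set X :=
  ⋃ u ∈ {u : List (Fin P.d) | IsCompleteWord u ∧ P.wordSum u = P.wordSum w},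
    P.wordTower u

end KRPartition

/-- A sequence of Kakutani–Rokhlin partitions with `𝒫⁽⁰⁾ = {X}` satisfying
(KR1)–(KR4). -/
structure KRSequence (X : Type*) [m : MeasurableSpace X] (μ : Measure X) (T : X → X) where
  P : ℕ → KRPartition X T
  d_zero : (P 0).d = 1
  h_zero : ∀ a, (P 0).h a = 1
  B_zero : ∀ a, (P 0).B a = Set.univ
  kr1 : ∀ n, (P (n + 1)).base ⊆ (P n).base
  kr2 : ∀ n s, (P (n + 1)).IsAtom s → ∃ t, (P n).IsAtom t ∧ s ⊆ t
  kr3 : Filter.Tendsto (fun n => μ (P n).base) Filter.atTop (nhds 0)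
  kr4 : MeasurableSpace.generateFrom {s : Set X | ∃ n, (P n).IsAtom s} = m


section AuxImage

variable {X : Type*} [MeasurableSpace X] {μ : Measure X} {T Ti : X → X}

structure GoodInv (μ : Measure X) (T Ti : X → X) : Prop where
  mp : MeasurePreserving T μ μ
  mi : Measurable Ti
  li : Function.LeftInverse Ti T
  ri : Function.RightInverse Ti T

theorem GoodInv.image_eq (h : GoodInv μ T Ti) (S : Set X) : T '' S = Ti ⁻¹' S := by
  ext y
  constructor
  · rintro ⟨x, hx, rfl⟩
    simpa [h.li x] using hx
  · intro hy
    exact ⟨Ti y, hy, h.ri y⟩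

theorem GoodInv.meas_image (h : GoodInv μ T Ti) {S : Set X} (hS : MeasurableSet S) :
    MeasurableSet (T '' S) := by
  rw [h.image_eq]; exact h.mi hS

theorem GoodInv.measure_image (h : GoodInv μ T Ti) {S : Set X} (hS : MeasurableSet S) :
    μ (T '' S) = μ S := by
  rw [h.image_eq]
  have h1 : μ (T ⁻¹' (Ti ⁻¹' S)) = μ (Ti ⁻¹' S) := h.mp.measure_preimage (h.mi hS).nullMeasurableSet
  have h2 : T ⁻¹' (Ti ⁻¹' S) = S := by
    ext x; simp [h.li x]
  rw [← h1, h2]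

theorem GoodInv.meas_image_iter (h : GoodInv μ T Ti) (j : ℕ) {S : Set X}
    (hS : MeasurableSet S) : MeasurableSet (T^[j] '' S) := by
  induction j with
  | zero => simpa using hS
  | succ n ih =>
    rw [Function.iterate_succ', Set.image_comp]
    exact h.meas_image ih

theorem GoodInv.measure_image_iter (h : GoodInv μ T Ti) (j : ℕ) {S : Set X}
    (hS : MeasurableSet S) : μ (T^[j] '' S) = μ S := by
  induction j with
  | zero => simp
  | succ n ih =>
    rw [Function.iterate_succ', Set.image_comp, h.measure_image (h.meas_image_iter n hS), ih]

end AuxImage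
section AuxAtoms

open symmDiff

variable {X : Type*} [MeasurableSpace X] {μ : MeasureTheory.Measure X} {T Ti : X → X}

namespace KRPartition

/-- The admissible pairs `(a, j)` with `j < h a`. -/
def pairs (P : KRPartition X T) : Set (Fin P.d × ℕ) := {p | p.2 < P.h p.1}

/-- The atom associated to a pair. -/
def atomSet (P : KRPartition X T) (p : Fin P.d × ℕ) : Set X := T^[p.2] '' P.B p.1

/-- Union of atoms indexed by `S`. -/
def atomU (P : KRPartition X T) (S : Set (Fin P.d × ℕ)) : Set X :=
  ⋃ p ∈ S ∩ P.pairs, P.atomSet p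

variable {P : KRPartition X T}

theorem meas_atomSet (h : GoodInv μ T Ti) (p : Fin P.d × ℕ) :
    MeasurableSet (P.atomSet p) := h.meas_image_iter _ (P.meas p.1)

theorem meas_atomU (h : GoodInv μ T Ti) (S : Set (Fin P.d × ℕ)) :
    MeasurableSet (P.atomU S) :=
  MeasurableSet.biUnion (Set.to_countable _) fun p _ => meas_atomSet h p

theorem atomU_univ : P.atomU Set.univ = Set.univ := by
  have := P.cover
  rw [Set.eq_univ_iff_forall] at this ⊢
  intro x
  obtain ⟨_, ⟨a, rfl⟩, _, ⟨j, rfl⟩, hx⟩ := this x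
  simp only [Set.mem_iUnion] at hx
  obtain ⟨hj, hx⟩ := hx
  refine Set.mem_biUnion (x := ((a, j) : Fin P.d × ℕ)) (Set.mem_inter (Set.mem_univ _)
    (by simpa [pairs] using Finset.mem_range.mp hj)) hx

theorem atomSet_eq_of_mem {p q : Fin P.d × ℕ} (hp : p ∈ P.pairs) (hq : q ∈ P.pairs)
    {x : X} (hxp : x ∈ P.atomSet p) (hxq : x ∈ P.atomSet q) : p = q := by
  by_contra hne
  exact Set.disjoint_left.mp (P.disj p.1 q.1 p.2 q.2 hp hq (by simpa using hne)) hxp hxq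

theorem exists_atom_mem (x : X) : ∃ p ∈ P.pairs, x ∈ P.atomSet p := by
  have hx : x ∈ P.atomU Set.univ := by rw [atomU_univ]; trivial
  obtain ⟨p, hp, hxp⟩ := Set.mem_iUnion₂.mp hx
  exact ⟨p, hp.2, hxp⟩

theorem atomSet_subset_atomU {S : Set (Fin P.d × ℕ)} {q : Fin P.d × ℕ} (hq : q ∈ P.pairs)
    {x : X} (hxq : x ∈ P.atomSet q) (hxS : x ∈ P.atomU S) : P.atomSet q ⊆ P.atomU S := by
  obtain ⟨p, hp, hxp⟩ := Set.mem_iUnion₂.mp hxS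
  have : p = q := atomSet_eq_of_mem hp.2 hq hxp hxq
  subst this
  exact Set.subset_biUnion_of_mem hp

theorem mem_atomU_iff {S : Set (Fin P.d × ℕ)} {q : Fin P.d × ℕ} (hq : q ∈ P.pairs)
    {x : X} (hxq : x ∈ P.atomSet q) : x ∈ P.atomU S ↔ q ∈ S := by
  constructor
  · intro hxS
    obtain ⟨p, hp, hxp⟩ := Set.mem_iUnion₂.mp hxS
    exact ((atomSet_eq_of_mem hp.2 hq hxp hxq) ▸ hp).1
  · intro hqS
    exact Set.mem_biUnion ⟨hqS, hq⟩ hxq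

theorem atomU_compl (S : Set (Fin P.d × ℕ)) : (P.atomU S)ᶜ = P.atomU Sᶜ := by
  ext x
  obtain ⟨q, hq, hxq⟩ := exists_atom_mem (P := P) x
  simp only [Set.mem_compl_iff]
  rw [mem_atomU_iff (S := S) hq hxq, mem_atomU_iff (S := Sᶜ) hq hxq]
  rfl

theorem atomU_union (S₁ S₂ : Set (Fin P.d × ℕ)) :
    P.atomU (S₁ ∪ S₂) = P.atomU S₁ ∪ P.atomU S₂ := by
  ext x
  obtain ⟨q, hq, hxq⟩ := exists_atom_mem (P := P) x
  simp only [Set.mem_union]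
  rw [mem_atomU_iff (S := S₁ ∪ S₂) hq hxq, mem_atomU_iff (S := S₁) hq hxq,
    mem_atomU_iff (S := S₂) hq hxq]
  rfl

end KRPartition

namespace KRSequence

variable {K : KRSequence X μ T}

theorem isAtom_iff (P : KRPartition X T) (s : Set X) :
    P.IsAtom s ↔ ∃ p ∈ P.pairs, s = P.atomSet p := by
  constructor
  · rintro ⟨a, j, hj, rfl⟩; exact ⟨(a, j), hj, rfl⟩
  · rintro ⟨⟨a, j⟩, hp, rfl⟩; exact ⟨a, j, hp, rfl⟩

theorem refine {m n : ℕ} (hmn : m ≤ n) :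
    ∀ s, (K.P n).IsAtom s → ∃ t, (K.P m).IsAtom t ∧ s ⊆ t := by
  induction n, hmn using Nat.le_induction with
  | base => exact fun s hs => ⟨s, hs, subset_rfl⟩
  | succ n hmn ih =>
    intro s hs
    obtain ⟨t, ht, hst⟩ := K.kr2 n s hs
    obtain ⟨u, hu, htu⟩ := ih t ht
    exact ⟨u, hu, hst.trans htu⟩

/-- Lift a union of atoms from level `m` to level `n ≥ m`. -/
theorem atomU_lift {m n : ℕ} (hmn : m ≤ n) (S : Set (Fin (K.P m).d × ℕ)) :
    (K.P m).atomU S =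
      (K.P n).atomU {p ∈ (K.P n).pairs | (K.P n).atomSet p ⊆ (K.P m).atomU S} := by
  apply Set.Subset.antisymm
  · intro x hx
    obtain ⟨q, hq, hxq⟩ := KRPartition.exists_atom_mem (P := K.P n) x
    have hsub : (K.P n).atomSet q ⊆ (K.P m).atomU S := by
      obtain ⟨t, ht, hqt⟩ := refine (K := K) hmn _ ((isAtom_iff _ _).mpr ⟨q, hq, rfl⟩)
      obtain ⟨p', hp', rfl⟩ := (isAtom_iff _ _).mp ht
      have hxt : x ∈ (K.P m).atomSet p' := hqt hxq
      exact hqt.trans (KRPartition.atomSet_subset_atomU hp' hxt hx)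
    exact Set.mem_biUnion ⟨⟨hq, hsub⟩, hq⟩ hxq
  · intro x hx
    obtain ⟨p, hp, hxp⟩ := Set.mem_iUnion₂.mp hx
    exact hp.1.2 hxp

/-- The collection of finite-level atom unions. -/
def algebraSets (K : KRSequence X μ T) : Set (Set X) :=
  {A | ∃ n S, A = (K.P n).atomU S}

theorem isSetAlgebra (K : KRSequence X μ T) : MeasureTheory.IsSetAlgebra K.algebraSets where
  empty_mem := ⟨0, ∅, by simp [KRPartition.atomU]⟩
  compl_mem := by
    rintro s ⟨n, S, rfl⟩
    exact ⟨n, Sᶜ, KRPartition.atomU_compl S⟩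
  union_mem := by
    rintro s t ⟨n, S, rfl⟩ ⟨n', S', rfl⟩
    refine ⟨max n n',
      {p ∈ (K.P (max n n')).pairs | (K.P (max n n')).atomSet p ⊆ (K.P n).atomU S} ∪
      {p ∈ (K.P (max n n')).pairs | (K.P (max n n')).atomSet p ⊆ (K.P n').atomU S'}, ?_⟩
    rw [KRPartition.atomU_union, ← atomU_lift (K := K) (le_max_left n n'),
      ← atomU_lift (K := K) (le_max_right n n')]

theorem generateFrom_algebraSets (K : KRSequence X μ T) (h : GoodInv μ T Ti) :
    MeasurableSpace.generateFrom K.algebraSets = ‹MeasurableSpace X› := by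
  apply le_antisymm
  · apply MeasurableSpace.generateFrom_le
    rintro s ⟨n, S, rfl⟩
    exact KRPartition.meas_atomU h S
  · suffices h2 : MeasurableSpace.generateFrom {s : Set X | ∃ n, (K.P n).IsAtom s} ≤
        MeasurableSpace.generateFrom K.algebraSets by
      rw [K.kr4] at h2; exact h2
    apply MeasurableSpace.generateFrom_le
    rintro s ⟨n, hs⟩
    obtain ⟨p, hp, rfl⟩ := (isAtom_iff _ _).mp hs
    refine MeasurableSpace.measurableSet_generateFrom ⟨n, {p}, ?_⟩
    ext x
    simp only [KRPartition.atomU, Set.mem_iUnion]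
    constructor
    · intro hx; exact ⟨p, ⟨rfl, hp⟩, hx⟩
    · rintro ⟨q, ⟨rfl, _⟩, hx⟩; exact hx

theorem approx (K : KRSequence X μ T) (h : GoodInv μ T Ti)
    [MeasureTheory.IsFiniteMeasure μ] {A : Set X} (hA : MeasurableSet A)
    {ε : ℝ} (hε : 0 < ε) :
    ∃ (n : ℕ) (S : Set (Fin (K.P n).d × ℕ)),
      μ (A ∆ (K.P n).atomU S) < ENNReal.ofReal ε := by
  have hdense := MeasureTheory.Measure.MeasureDense.of_generateFrom_isSetAlgebra_finite
    (μ := μ) K.isSetAlgebra (K.generateFrom_algebraSets h).symm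
  obtain ⟨t, ⟨n, S, rfl⟩, ht⟩ := hdense.approx A hA (MeasureTheory.measure_ne_top μ A) ε hε
  exact ⟨n, S, ht⟩

end KRSequence

end AuxAtoms
section AuxWords

variable {X : Type*} [MeasurableSpace X] {μ : MeasureTheory.Measure X} {T Ti : X → X}

namespace KRPartition

variable {P : KRPartition X T}

theorem word_ne_nil {w : List (Fin P.d)} (hw : IsCompleteWord w) : w ≠ [] := by
  intro h; rw [h] at hw; simp [IsCompleteWord] at hw

theorem word_pos {w : List (Fin P.d)} (hw : IsCompleteWord w) : 0 < w.length :=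
  List.length_pos_iff.mpr (word_ne_nil hw)

theorem meas_wordBase (hT : Measurable T) (w : List (Fin P.d)) :
    MeasurableSet (P.wordBase w) := by
  have : P.wordBase w =
      ⋂ i : Fin w.length, T^[((w.take i).map P.h).sum] ⁻¹' P.B (w.get i) := by
    ext x; simp [wordBase, Set.mem_iInter]
  rw [this]
  exact MeasurableSet.iInter fun i => (hT.iterate _) (P.meas _)

theorem wordBase_subset {w : List (Fin P.d)} (hw : 0 < w.length) :
    P.wordBase w ⊆ P.B (w.get ⟨0, hw⟩) := by
  intro x hx
  have := hx ⟨0, hw⟩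
  simpa using this

theorem wordBase_subset_base {w : List (Fin P.d)} (hw : 0 < w.length) :
    P.wordBase w ⊆ P.base := fun x hx =>
  Set.mem_iUnion.mpr ⟨w.get ⟨0, hw⟩, wordBase_subset hw hx⟩

theorem head_eq_getLast {w : List (Fin P.d)} (hw : IsCompleteWord w)
    (h2 : w.length - 1 < w.length) :
    w.get ⟨0, word_pos hw⟩ = w.get ⟨w.length - 1, h2⟩ := by
  have hne := word_ne_nil hw
  have h1 : w.head? = some (w.get ⟨0, word_pos hw⟩) := by
    cases w with
    | nil => exact absurd rfl hne
    | cons a l => rfl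
  have h2' : w.getLast? = some (w.getLast hne) := List.getLast?_eq_getLast hne
  have h3 : w.getLast hne = w.get ⟨w.length - 1, h2⟩ := List.getLast_eq_getElem hne
  have := hw.2
  rw [h1, h2', h3] at this
  exact Option.some_injective _ this

theorem wordBase_iterate {w : List (Fin P.d)} (hw : IsCompleteWord w) {y : X}
    (hy : y ∈ P.wordBase w) : T^[P.wordSum w] y ∈ P.B (w.get ⟨0, word_pos hw⟩) := by
  have h2 : w.length - 1 < w.length := by
    have := word_pos hw; omega
  have hmem := hy ⟨w.length - 1, h2⟩
  have hsum : ((w.take (w.length - 1)).map P.h).sum = P.wordSum w := by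
    rw [KRPartition.wordSum, List.dropLast_eq_take]
  rw [head_eq_getLast hw h2, ← hsum]
  exact hmem

theorem headD_eq {w : List (Fin P.d)} (hw : 0 < w.length) :
    (w.map P.h).headD 0 = P.h (w.get ⟨0, hw⟩) := by
  cases w with
  | nil => simp at hw
  | cons a l => rfl

theorem height_le_wordSum {w : List (Fin P.d)} (hw : IsCompleteWord w) :
    P.h (w.get ⟨0, word_pos hw⟩) ≤ P.wordSum w := by
  obtain ⟨a, l, rfl⟩ : ∃ a l, w = a :: l := by
    cases w with
    | nil => exact absurd rfl (word_ne_nil hw)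
    | cons a l => exact ⟨a, l, rfl⟩
  have hl : l ≠ [] := by
    have := hw.1; intro h; rw [h] at this; simp at this
  rw [KRPartition.wordSum, List.dropLast_cons_of_ne_nil hl]
  simp

theorem meas_wordTower (h : GoodInv μ T Ti) (w : List (Fin P.d)) :
    MeasurableSet (P.wordTower w) :=
  MeasurableSet.biUnion (Set.to_countable _) fun _ _ =>
    h.meas_image_iter _ (meas_wordBase h.mp.measurable w)

end KRPartition

end AuxWords
section AuxKey

variable {X : Type*} [MeasurableSpace X] {μ : MeasureTheory.Measure X} {T Ti : X → X}

namespace KRSequence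

open MeasureTheory

/-- Key estimate: on the subtower generated by a complete word, shifted points return to
the same atom after `wordSum` steps. -/
theorem key_estimate (h : GoodInv μ T Ti) {K : KRSequence X μ T} {m n : ℕ} (hmn : m ≤ n)
    (S : Set (Fin (K.P m).d × ℕ)) {w : List (Fin (K.P n).d)} (hw : IsCompleteWord w)
    (i : ℕ) :
    μ (T^[i] ⁻¹' ((K.P m).atomU S) ∩ (K.P n).wordTower w) ≤
      μ ((K.P m).atomU S ∩ T^[(K.P n).wordSum w] ⁻¹' ((K.P m).atomU S)) +
        i * μ (K.P n).base := by
  set A := (K.P m).atomU S with hA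
  set s := (K.P n).wordSum w with hs
  have hpos : 0 < w.length := KRPartition.word_pos hw
  set a₀ : Fin (K.P n).d := w.get ⟨0, hpos⟩ with ha₀
  set h₁ : ℕ := (K.P n).h a₀ with hh₁
  have hhead : (w.map (K.P n).h).headD 0 = h₁ := KRPartition.headD_eq hpos
  set Bw := (K.P n).wordBase w with hBw
  have hBwm : MeasurableSet Bw := KRPartition.meas_wordBase h.mp.measurable w
  have hBwbase : Bw ⊆ (K.P n).base := KRPartition.wordBase_subset_base hpos
  set Elow : Set X := ⋃ j ∈ Finset.range (h₁ - i), T^[j] '' Bw with hElow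
  have hAmeas : MeasurableSet A := KRPartition.meas_atomU h S
  -- Step 1: the lower part of the tower returns into `A`.
  have step1 : T^[i] ⁻¹' A ∩ Elow ⊆ T^[i] ⁻¹' (A ∩ T^[s] ⁻¹' A) := by
    rintro x ⟨hxA, hxE⟩
    simp only [hElow, Set.mem_iUnion] at hxE
    obtain ⟨j, hj, y, hy, rfl⟩ := hxE
    have hji : j + i < h₁ := by
      have hj' : j < h₁ - i := Finset.mem_range.mp hj
      omega
    have hu : T^[i] (T^[j] y) = T^[i + j] y := by
      rw [← Function.iterate_add_apply]
    -- `u` lies in the atom `(a₀, i + j)` of level `n`.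
    have huq : T^[i + j] y ∈ (K.P n).atomSet (a₀, i + j) :=
      ⟨y, KRPartition.wordBase_subset hpos hy, rfl⟩
    have hqp : ((a₀, i + j) : Fin (K.P n).d × ℕ) ∈ (K.P n).pairs := by
      simp only [KRPartition.pairs, Set.mem_setOf_eq]
      omega
    -- find the level-`m` atom containing it
    obtain ⟨t, ht, hsub⟩ := refine (K := K) hmn _ ((isAtom_iff (K.P n) _).mpr ⟨_, hqp, rfl⟩)
    obtain ⟨p', hp', rfl⟩ := (isAtom_iff _ _).mp ht
    have huA : T^[i + j] y ∈ A := by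
      have := hxA
      rw [Set.mem_preimage, hu] at this
      exact this
    have hatomA : (K.P m).atomSet p' ⊆ A :=
      KRPartition.atomSet_subset_atomU hp' (hsub huq) huA
    -- the return point
    have hret : T^[s] (T^[i + j] y) ∈ (K.P n).atomSet (a₀, i + j) := by
      have hb : T^[s] y ∈ (K.P n).B a₀ := KRPartition.wordBase_iterate hw hy
      refine ⟨T^[s] y, hb, ?_⟩
      rw [← Function.iterate_add_apply, ← Function.iterate_add_apply, Nat.add_comm s (i + j)]
    refine ⟨?_, ?_⟩
    · show T^[i] (T^[j] y) ∈ A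
      rw [hu]
      exact huA
    · show T^[s] (T^[i] (T^[j] y)) ∈ A
      rw [hu]
      exact hatomA (hsub hret)
  -- Step 2: measure bound for the lower part.
  have step2 : μ (T^[i] ⁻¹' A ∩ Elow) ≤ μ (A ∩ T^[s] ⁻¹' A) := by
    calc μ (T^[i] ⁻¹' A ∩ Elow) ≤ μ (T^[i] ⁻¹' (A ∩ T^[s] ⁻¹' A)) := measure_mono step1
    _ = μ (A ∩ T^[s] ⁻¹' A) :=
      (h.mp.iterate i).measure_preimage
        (hAmeas.inter ((h.mp.measurable.iterate s) hAmeas)).nullMeasurableSet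
  -- Step 3: the upper part is small.
  have step3 : μ ((K.P n).wordTower w \ Elow) ≤ i * μ (K.P n).base := by
    have hsub : (K.P n).wordTower w \ Elow ⊆
        ⋃ j ∈ Finset.range h₁ \ Finset.range (h₁ - i), T^[j] '' Bw := by
      intro x hx
      obtain ⟨hx1, hx2⟩ := hx
      simp only [KRPartition.wordTower, hhead, Set.mem_iUnion] at hx1
      obtain ⟨j, hj, hxj⟩ := hx1
      simp only [Set.mem_iUnion]
      refine ⟨j, ?_, hxj⟩
      have hjh : j < h₁ := Finset.mem_range.mp hj
      refine Finset.mem_sdiff.mpr ⟨hj, fun hmem => hx2 ?_⟩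
      simp only [hElow, Set.mem_iUnion]
      exact ⟨j, hmem, hxj⟩
    calc μ ((K.P n).wordTower w \ Elow) ≤
        μ (⋃ j ∈ Finset.range h₁ \ Finset.range (h₁ - i), T^[j] '' Bw) := measure_mono hsub
    _ ≤ ∑ j ∈ Finset.range h₁ \ Finset.range (h₁ - i), μ (T^[j] '' Bw) :=
        measure_biUnion_finset_le _ _
    _ = ∑ j ∈ Finset.range h₁ \ Finset.range (h₁ - i), μ Bw := by
        refine Finset.sum_congr rfl fun j _ => h.measure_image_iter j hBwm
    _ = (Finset.range h₁ \ Finset.range (h₁ - i)).card * μ Bw := by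
        rw [Finset.sum_const, nsmul_eq_mul]
    _ ≤ i * μ (K.P n).base := by
        have hcard : (Finset.range h₁ \ Finset.range (h₁ - i)).card ≤ i := by
          rw [Finset.card_sdiff_of_subset (Finset.range_mono (Nat.sub_le _ _))]
          simp only [Finset.card_range]
          omega
        exact mul_le_mul' (by exact_mod_cast Nat.cast_le.mpr hcard) (measure_mono hBwbase)
  -- Combine.
  calc μ (T^[i] ⁻¹' A ∩ (K.P n).wordTower w) ≤
      μ ((T^[i] ⁻¹' A ∩ Elow) ∪ ((K.P n).wordTower w \ Elow)) := by
        apply measure_mono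
        rintro x ⟨hx1, hx2⟩
        by_cases hxE : x ∈ Elow
        · exact Or.inl ⟨hx1, hxE⟩
        · exact Or.inr ⟨hx2, hxE⟩
  _ ≤ μ (T^[i] ⁻¹' A ∩ Elow) + μ ((K.P n).wordTower w \ Elow) := measure_union_le _ _
  _ ≤ μ (A ∩ T^[s] ⁻¹' A) + i * μ (K.P n).base := add_le_add step2 step3

end KRSequence

end AuxKey
section AuxMET

open MeasureTheory Filter

variable {X : Type*} [MeasurableSpace X] {μ : Measure X} {T : X → X}

/-- The Koopman operator on `L²`. -/
noncomputable def koopman (hT : MeasurePreserving T μ μ) :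
    Lp ℝ 2 μ →L[ℝ] Lp ℝ 2 μ :=
  LinearMap.mkContinuous
    { toFun := Lp.compMeasurePreserving T hT
      map_add' := map_add _
      map_smul' := by
        intro c g
        apply Lp.ext
        filter_upwards [Lp.coeFn_compMeasurePreserving (c • g) hT,
          hT.quasiMeasurePreserving.ae_eq_comp (Lp.coeFn_smul c g),
          (Lp.coeFn_smul c (Lp.compMeasurePreserving T hT g)),
          hT.quasiMeasurePreserving.ae_eq_comp
            (ae_eq_refl (⇑g)),
          (Lp.coeFn_compMeasurePreserving g hT)] with x h1 h2 h3 h4 h5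
        simp only [RingHom.id_apply]
        rw [h1, h3]
        have : (⇑(c • g) ∘ T) x = (c • ⇑g ∘ T) x := h2
        rw [this]
        simp only [Pi.smul_apply, Function.comp_apply, smul_eq_mul]
        rw [h5]
        rfl }
    1
    (fun g => by
      simp only [LinearMap.coe_mk, AddHom.coe_mk, one_mul]
      exact le_of_eq (Lp.norm_compMeasurePreserving g hT))

theorem koopman_apply (hT : MeasurePreserving T μ μ) (g : Lp ℝ 2 μ) :
    koopman hT g =ᵐ[μ] ⇑g ∘ T :=
  Lp.coeFn_compMeasurePreserving g hT

theorem norm_koopman_le (hT : MeasurePreserving T μ μ) : ‖koopman hT‖ ≤ 1 :=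
  ContinuousLinearMap.opNorm_le_bound _ zero_le_one fun g => by
    rw [one_mul]
    exact le_of_eq (Lp.norm_compMeasurePreserving g hT)

theorem koopman_iterate (hT : MeasurePreserving T μ μ) (g : Lp ℝ 2 μ) (i : ℕ) :
    ⇑((koopman hT)^[i] g) =ᵐ[μ] ⇑g ∘ T^[i] := by
  induction i with
  | zero => simp [Filter.EventuallyEq.refl]
  | succ n ih =>
    rw [Function.iterate_succ_apply']
    calc ⇑(koopman hT ((koopman hT)^[n] g)) =ᵐ[μ] ⇑((koopman hT)^[n] g) ∘ T :=
        koopman_apply hT _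
    _ =ᵐ[μ] (⇑g ∘ T^[n]) ∘ T := hT.quasiMeasurePreserving.ae_eq_comp ih
    _ = ⇑g ∘ T^[n + 1] := by
        funext x; simp [Function.iterate_succ_apply, Function.comp]

end AuxMET
section AuxMET2

open MeasureTheory Filter

variable {X : Type*} [MeasurableSpace X] {μ : Measure X} {T : X → X}

theorem inner_indicatorL2 [IsFiniteMeasure μ] {E : Set X} (hE : MeasurableSet E)
    (f : Lp ℝ 2 μ) :
    (inner (𝕜 := ℝ) (indicatorConstLp 2 hE (measure_ne_top μ E) (1 : ℝ)) f) =
      ∫ x in E, f x ∂μ := by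
  rw [L2.inner_indicatorConstLp_eq_setIntegral_inner]
  simp [RCLike.inner_apply]

theorem inner_constOneL2 [IsFiniteMeasure μ] (f : Lp ℝ 2 μ) :
    (inner (𝕜 := ℝ) (Lp.const 2 μ (1 : ℝ)) f) = ∫ x, f x ∂μ := by
  rw [L2.inner_def]
  apply integral_congr_ae
  filter_upwards [Lp.coeFn_const (p := 2) (μ := μ) (c := (1 : ℝ))] with x hx
  rw [hx]
  simp [RCLike.inner_apply]

theorem inner_indicator_iterate [IsFiniteMeasure μ] (hT : MeasurePreserving T μ μ)
    {A E : Set X} (hA : MeasurableSet A) (hE : MeasurableSet E) (i : ℕ) :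
    (inner (𝕜 := ℝ) (indicatorConstLp 2 hE (measure_ne_top μ E) (1 : ℝ))
        ((koopman hT)^[i] (indicatorConstLp 2 hA (measure_ne_top μ A) (1 : ℝ)))) =
      (μ (T^[i] ⁻¹' A ∩ E)).toReal := by
  rw [inner_indicatorL2 hE]
  have h1 : ⇑((koopman hT)^[i] (indicatorConstLp 2 hA (measure_ne_top μ A) (1 : ℝ)))
      =ᵐ[μ] fun x => (T^[i] ⁻¹' A).indicator (fun _ => (1 : ℝ)) x := by
    calc ⇑((koopman hT)^[i] (indicatorConstLp 2 hA (measure_ne_top μ A) (1 : ℝ)))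
        =ᵐ[μ] ⇑(indicatorConstLp 2 hA (measure_ne_top μ A) (1 : ℝ)) ∘ T^[i] :=
          koopman_iterate hT _ i
    _ =ᵐ[μ] (A.indicator (fun _ => (1 : ℝ))) ∘ T^[i] :=
          (hT.iterate i).quasiMeasurePreserving.ae_eq_comp
            (indicatorConstLp_coeFn (p := 2) (hs := hA))
    _ = fun x => (T^[i] ⁻¹' A).indicator (fun _ => (1 : ℝ)) x := by
          funext x
          by_cases hx : T^[i] x ∈ A <;> simp [Set.indicator, hx, Function.comp]
  rw [integral_congr_ae (ae_restrict_of_ae h1)]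
  rw [setIntegral_indicator ((hT.measurable.iterate i) hA)]
  simp [Set.inter_comm]; rfl

set_option maxHeartbeats 1000000 in
set_option synthInstance.maxHeartbeats 400000 in
theorem met_estimate [IsProbabilityMeasure μ] (herg : Ergodic T μ) {A : Set X}
    (hA : MeasurableSet A) {ε : ℝ} (hε : 0 < ε) :
    ∃ N : ℕ, 0 < N ∧ ∀ E : Set X, MeasurableSet E →
      (μ A).toReal * (μ E).toReal - ε ≤
        (N : ℝ)⁻¹ * ∑ i ∈ Finset.range N, (μ (T^[i] ⁻¹' A ∩ E)).toReal := by
  have hT : MeasurePreserving T μ μ := herg.toMeasurePreserving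
  set U := koopman hT with hU
  set fA : Lp ℝ 2 μ := indicatorConstLp 2 hA (measure_ne_top μ A) (1 : ℝ) with hfA
  have pb := U.tendsto_birkhoffAverage_orthogonalProjection (norm_koopman_le hT) fA
  set p : Lp ℝ 2 μ := ↑((U.eqLocus (1 : Lp ℝ 2 μ →L[ℝ] Lp ℝ 2 μ)).orthogonalProjectionOnto fA) with hp
  -- `p` is a fixed point of the Koopman operator.
  have hpfix : U p = p := by
    have h2 := ((U.eqLocus (1 : Lp ℝ 2 μ →L[ℝ] Lp ℝ 2 μ)).orthogonalProjectionOnto fA).2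
    rw [LinearMap.mem_eqLocus] at h2
    exact h2
  have hpT : ⇑p ∘ T =ᵐ[μ] ⇑p := by
    have h1 : ⇑(U p) =ᵐ[μ] ⇑p ∘ T := koopman_apply hT p
    rw [hpfix] at h1
    exact h1.symm
  obtain ⟨c, hc⟩ := herg.ae_eq_const_of_ae_eq_comp₀
    (Lp.aestronglyMeasurable p).aemeasurable.nullMeasurable hpT
  -- the constant function 1
  set one : Lp ℝ 2 μ := Lp.const 2 μ (1 : ℝ) with hone
  have hone_coe : ⇑one =ᵐ[μ] fun _ => (1 : ℝ) := Lp.coeFn_const (p := 2) (μ := μ) (c := (1 : ℝ))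
  have hone_mem : one ∈ U.eqLocus (1 : Lp ℝ 2 μ →L[ℝ] Lp ℝ 2 μ) := by
    rw [LinearMap.mem_eqLocus]
    show U one = one
    apply Lp.ext
    calc ⇑(U one) =ᵐ[μ] ⇑one ∘ T := koopman_apply hT one
    _ =ᵐ[μ] (fun _ => (1 : ℝ)) ∘ T := hT.quasiMeasurePreserving.ae_eq_comp hone_coe
    _ = fun _ => (1 : ℝ) := rfl
    _ =ᵐ[μ] ⇑one := hone_coe.symm
  -- value of the constant
  have hinner_one_fA : (inner (𝕜 := ℝ) one fA) = (μ A).toReal := by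
    rw [inner_constOneL2]
    rw [hfA, integral_indicatorConstLp hA (measure_ne_top μ A) (1 : ℝ)]
    simp [Measure.real]
  have hinner_one_p : (inner (𝕜 := ℝ) one p) = c := by
    rw [inner_constOneL2, integral_congr_ae hc]
    simp
  have hcval : c = (μ A).toReal := by
    have horth : (inner (𝕜 := ℝ) (fA - p) one) = 0 :=
      Submodule.starProjection_inner_eq_zero fA one hone_mem
    rw [inner_sub_left] at horth
    have e2 : (inner (𝕜 := ℝ) fA one) = (inner (𝕜 := ℝ) one fA) := real_inner_comm _ _
    have e3 : (inner (𝕜 := ℝ) p one) = (inner (𝕜 := ℝ) one p) := real_inner_comm _ _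
    linarith [hinner_one_fA, hinner_one_p]
  -- choose N
  obtain ⟨N₀, hN₀⟩ := Metric.tendsto_atTop.mp pb ε hε
  refine ⟨max N₀ 1, lt_of_lt_of_le one_pos (le_max_right _ _), ?_⟩
  set N := max N₀ 1 with hN
  have hdist : ‖birkhoffAverage ℝ U _root_.id N fA - p‖ < ε := by
    have := hN₀ N (le_max_left _ _)
    rwa [dist_eq_norm] at this
  intro E hE
  set gE : Lp ℝ 2 μ := indicatorConstLp 2 hE (measure_ne_top μ E) (1 : ℝ) with hgE
  have hgE_norm : ‖gE‖ ≤ 1 := by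
    rw [hgE, norm_indicatorConstLp (by norm_num) (by norm_num)]
    simp only [norm_one, one_mul]
    apply Real.rpow_le_one ENNReal.toReal_nonneg
    · exact ENNReal.toReal_le_of_le_ofReal one_pos.le (by simpa using prob_le_one)
    · positivity
  have key1 : (inner (𝕜 := ℝ) gE (birkhoffAverage ℝ U _root_.id N fA)) =
      (N : ℝ)⁻¹ * ∑ i ∈ Finset.range N, (μ (T^[i] ⁻¹' A ∩ E)).toReal := by
    rw [birkhoffAverage, birkhoffSum]
    rw [real_inner_smul_right, inner_sum]
    congr 1
    refine Finset.sum_congr rfl fun i _ => ?_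
    exact inner_indicator_iterate hT hA hE i
  have key2 : (inner (𝕜 := ℝ) gE p) = (μ A).toReal * (μ E).toReal := by
    rw [hgE, inner_indicatorL2 hE, integral_congr_ae (ae_restrict_of_ae hc)]
    simp only [Function.const_apply]
    rw [MeasureTheory.setIntegral_const, hcval]
    simp [mul_comm, Measure.real]
  have key3 : |(inner (𝕜 := ℝ) gE (birkhoffAverage ℝ U _root_.id N fA - p))| ≤ ε := by
    calc |(inner (𝕜 := ℝ) gE (birkhoffAverage ℝ U _root_.id N fA - p))| ≤
        ‖gE‖ * ‖birkhoffAverage ℝ U _root_.id N fA - p‖ := abs_real_inner_le_norm _ _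
    _ ≤ 1 * ε := mul_le_mul hgE_norm hdist.le (norm_nonneg _) zero_le_one
    _ = ε := one_mul ε
  have hsplit : (inner (𝕜 := ℝ) gE (birkhoffAverage ℝ U _root_.id N fA)) =
      (inner (𝕜 := ℝ) gE p) +
        (inner (𝕜 := ℝ) gE (birkhoffAverage ℝ U _root_.id N fA - p)) := by
    rw [inner_sub_right]; ring
  rw [← key1, hsplit, key2]
  have habs := abs_le.mp key3
  linarith [habs.1]

end AuxMET2
section AuxSubseq

open MeasureTheory Filter
open scoped ENNReal

variable {X : Type*} [MeasurableSpace X] {μ : Measure X} {T Ti : X → X}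

theorem tower_measure_le (h : GoodInv μ T Ti) {P : KRPartition X T}
    {w : List (Fin P.d)} (hw : IsCompleteWord w) :
    μ (P.wordTower w) ≤ (P.wordSum w : ℝ≥0∞) * μ P.base := by
  have hpos : 0 < w.length := KRPartition.word_pos hw
  have hhead : (w.map P.h).headD 0 = P.h (w.get ⟨0, hpos⟩) := KRPartition.headD_eq hpos
  have hBwm : MeasurableSet (P.wordBase w) := KRPartition.meas_wordBase h.mp.measurable w
  calc μ (P.wordTower w) ≤
      ∑ j ∈ Finset.range ((w.map P.h).headD 0), μ (T^[j] '' P.wordBase w) :=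
        measure_biUnion_finset_le _ _
  _ = ∑ j ∈ Finset.range ((w.map P.h).headD 0), μ (P.wordBase w) :=
        Finset.sum_congr rfl fun j _ => h.measure_image_iter j hBwm
  _ = ((w.map P.h).headD 0 : ℝ≥0∞) * μ (P.wordBase w) := by
        rw [Finset.sum_const, Finset.card_range, nsmul_eq_mul]
  _ ≤ (P.wordSum w : ℝ≥0∞) * μ P.base := by
        apply mul_le_mul'
        · rw [hhead]
          exact_mod_cast Nat.cast_le.mpr (KRPartition.height_le_wordSum hw)
        · exact measure_mono (KRPartition.wordBase_subset_base hpos)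

theorem exists_good_subseq [IsProbabilityMeasure μ] (h : GoodInv μ T Ti)
    (K : KRSequence X μ T) (w : (n : ℕ) → List (Fin (K.P n).d))
    (hw : ∀ n, IsCompleteWord (w n)) {γ : ℝ} (hγ : 0 < γ)
    (hlim : ENNReal.ofReal γ ≤
      Filter.limsup (fun n => μ ((K.P n).wordTower (w n))) Filter.atTop) :
    ∃ φ : ℕ → ℕ, StrictMono φ ∧
      StrictMono (fun k => (K.P (φ k)).wordSum (w (φ k))) ∧
      ∀ k : ℕ, γ - 1 / (k + 1) < (μ ((K.P (φ k)).wordTower (w (φ k)))).toReal := by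
  set u : ℕ → ℝ≥0∞ := fun n => μ ((K.P n).wordTower (w n)) with hu
  set sq : ℕ → ℕ := fun n => (K.P n).wordSum (w n) with hsq
  have hufin : ∀ n, u n ≠ ∞ := fun n => measure_ne_top μ _
  have hub : ∀ n, u n ≤ (sq n : ℝ≥0∞) * μ (K.P n).base := fun n =>
    tower_measure_le h (hw n)
  have H : ∀ k M Ms : ℕ, ∃ n, M < n ∧ Ms < sq n ∧ γ - 1 / (k + 1) < (u n).toReal := by
    intro k M Ms
    set β : ℝ≥0∞ := max (ENNReal.ofReal (γ - 1 / (k + 1))) (ENNReal.ofReal (γ / 2)) with hβ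
    have hβlt : β < ENNReal.ofReal γ := by
      rw [hβ, max_lt_iff]
      constructor
      · rcases le_or_gt (γ - 1 / (k + 1)) 0 with h0 | h0
        · rw [ENNReal.ofReal_eq_zero.mpr h0]
          exact ENNReal.ofReal_pos.mpr hγ
        · apply ENNReal.ofReal_lt_ofReal_iff_of_nonneg h0.le |>.mpr
          have : (0 : ℝ) < 1 / (k + 1) := by positivity
          linarith
      · apply ENNReal.ofReal_lt_ofReal_iff_of_nonneg (by positivity) |>.mpr
        linarith
    have hfreq : ∃ᶠ n in atTop, β < u n :=
      Filter.frequently_lt_of_lt_limsup (h := lt_of_lt_of_le hβlt hlim)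
    have hγ2pos : (0 : ℝ≥0∞) < ENNReal.ofReal (γ / 2) := ENNReal.ofReal_pos.mpr (by linarith)
    set η : ℝ≥0∞ := ENNReal.ofReal (γ / 2) / (Ms + 1) with hη
    have hηpos : 0 < η := by
      apply ENNReal.div_pos hγ2pos.ne'
      exact ENNReal.add_ne_top.mpr ⟨ENNReal.natCast_ne_top Ms, ENNReal.one_ne_top⟩
    have hev : ∀ᶠ n in atTop, μ (K.P n).base < η :=
      K.kr3.eventually_lt_const hηpos
    have hev2 : ∀ᶠ n in atTop, M < n := eventually_gt_atTop M
    obtain ⟨n, hn1, hn2, hn3⟩ := (hfreq.and_eventually (hev.and hev2)).exists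
    refine ⟨n, hn3, ?_, ?_⟩
    · -- s n must be large
      by_contra hle
      push_neg at hle
      have hc1 : u n ≤ (Ms + 1 : ℝ≥0∞) * μ (K.P n).base := by
        calc u n ≤ (sq n : ℝ≥0∞) * μ (K.P n).base := hub n
        _ ≤ (Ms + 1 : ℝ≥0∞) * μ (K.P n).base := by
            apply mul_le_mul_of_nonneg_right ?_ zero_le
            have h9 : sq n ≤ Ms + 1 := by omega
            exact_mod_cast Nat.cast_le.mpr h9
      have hc2 : (Ms + 1 : ℝ≥0∞) * μ (K.P n).base < (Ms + 1 : ℝ≥0∞) * η := by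
        have hMs0 : ((Ms : ℝ≥0∞) + 1) ≠ 0 := (lt_of_lt_of_le one_pos le_add_self).ne'
        have hMsT : ((Ms : ℝ≥0∞) + 1) ≠ ∞ :=
          ENNReal.add_ne_top.mpr ⟨ENNReal.natCast_ne_top Ms, ENNReal.one_ne_top⟩
        rw [mul_comm _ (μ _), mul_comm _ η]
        exact ENNReal.mul_lt_mul_left hMs0 hMsT hn2
      have hc3 : (Ms + 1 : ℝ≥0∞) * η = ENNReal.ofReal (γ / 2) := by
        rw [hη, ENNReal.mul_div_cancel (lt_of_lt_of_le one_pos le_add_self).ne'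
          (ENNReal.add_ne_top.mpr ⟨ENNReal.natCast_ne_top Ms, ENNReal.one_ne_top⟩)]
      have : u n < ENNReal.ofReal (γ / 2) := by
        calc u n ≤ (Ms + 1 : ℝ≥0∞) * μ (K.P n).base := hc1
        _ < (Ms + 1 : ℝ≥0∞) * η := hc2
        _ = ENNReal.ofReal (γ / 2) := hc3
      exact absurd (lt_of_le_of_lt (le_max_right _ _) hn1) (not_lt.mpr this.le)
    · -- the toReal bound
      have hβ1 : ENNReal.ofReal (γ - 1 / (k + 1)) < u n :=
        lt_of_le_of_lt (le_max_left _ _) hn1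
      rcases le_or_gt (γ - 1 / (k + 1)) 0 with h0 | h0
      · have hupos : 0 < u n := lt_of_le_of_lt zero_le hβ1
        have := ENNReal.toReal_pos hupos.ne' (hufin n)
        linarith
      · exact (ENNReal.ofReal_lt_iff_lt_toReal h0.le (hufin n)).mp hβ1
  choose f hf1 hf2 hf3 using H
  set φ : ℕ → ℕ := fun k => Nat.rec (f 0 0 0) (fun k ih => f (k + 1) ih (sq ih)) k with hφ
  have hφsucc : ∀ k, φ (k + 1) = f (k + 1) (φ k) (sq (φ k)) := fun k => rfl
  refine ⟨φ, strictMono_nat_of_lt_succ fun k => ?_, strictMono_nat_of_lt_succ fun k => ?_, ?_⟩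
  · rw [hφsucc]; exact hf1 _ _ _
  · rw [hφsucc]; exact hf2 _ _ _
  · intro k
    cases k with
    | zero => exact hf3 0 0 0
    | succ k => rw [hφsucc]; exact hf3 _ _ _

end AuxSubseq

open symmDiff in
set_option maxHeartbeats 1000000 in
/-- Sufficient condition for partial rigidity: if there is a sequence of complete words
`(w(n))ₙ` with `limsup_n μ(𝒯⁽ⁿ⁾_{w(n)}) ≥ γ`, then the system is `γ`-rigid. -/
theorem kr_sufficient_condition_partial_rigidity
    {X : Type*} [MeasurableSpace X] [StandardBorelSpace X]
    (μ : Measure X) [IsProbabilityMeasure μ] (T : X → X)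
    (herg : Ergodic T μ)
    (hinv : ∃ Tinv : X → X, Measurable Tinv ∧
      Function.LeftInverse Tinv T ∧ Function.RightInverse Tinv T)
    (hna : ∀ x : X, μ {x} = 0)
    (γ : ℝ) (hγ : γ ∈ Set.Ioc (0 : ℝ) 1)
    (K : KRSequence X μ T)
    (w : (n : ℕ) → List (Fin (K.P n).d))
    (hw : ∀ n, IsCompleteWord (w n))
    (hlim : ENNReal.ofReal γ ≤
      Filter.limsup (fun n => μ ((K.P n).wordTower (w n))) Filter.atTop) :
    IsPartiallyRigid μ T γ := by
  obtain ⟨Tinv, hTiM, hli, hri⟩ := hinv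
  have hGI : GoodInv μ T Tinv := ⟨herg.toMeasurePreserving, hTiM, hli, hri⟩
  obtain ⟨φ, hφ, hsφ, hbound⟩ := exists_good_subseq hGI K w hw hγ.1 hlim
  refine ⟨fun k => (K.P (φ k)).wordSum (w (φ k)), hsφ, ?_, ?_⟩
  · have h1 : 0 < (K.P (φ 0)).h ((w (φ 0)).get ⟨0, KRPartition.word_pos (hw (φ 0))⟩) :=
      (K.P (φ 0)).h_pos _
    exact lt_of_lt_of_le h1 (KRPartition.height_le_wordSum (hw (φ 0)))
  intro A hA
  set tA := (μ A).toReal with htA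
  have main : ∀ ε : ℝ, 0 < ε → ∀ᶠ k in atTop,
      ENNReal.ofReal (γ * tA - ε) ≤
        μ (A ∩ T^[(K.P (φ k)).wordSum (w (φ k))] ⁻¹' A) := by
    intro ε hε
    set ε' := ε / 6 with hε'def
    have hε'pos : 0 < ε' := by positivity
    obtain ⟨m, S, hAS⟩ := K.approx hGI hA hε'pos
    set A' := (K.P m).atomU S with hA'def
    have hA'meas : MeasurableSet A' := KRPartition.meas_atomU hGI S
    set tA' := (μ A').toReal with htA'
    -- symmetric difference bounds
    have f1 : (μ (A' \ A)).toReal ≤ ε' := by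
      have h1 : μ (A' \ A) ≤ ENNReal.ofReal ε' := by
        refine le_trans (measure_mono ?_) hAS.le
        intro x hx; exact Or.inr ⟨hx.1, hx.2⟩
      calc (μ (A' \ A)).toReal ≤ (ENNReal.ofReal ε').toReal :=
        ENNReal.toReal_mono ENNReal.ofReal_ne_top h1
      _ = ε' := ENNReal.toReal_ofReal hε'pos.le
    have f2 : (μ (A \ A')).toReal ≤ ε' := by
      have h1 : μ (A \ A') ≤ ENNReal.ofReal ε' := by
        refine le_trans (measure_mono ?_) hAS.le
        intro x hx; exact Or.inl ⟨hx.1, hx.2⟩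
      calc (μ (A \ A')).toReal ≤ (ENNReal.ofReal ε').toReal :=
        ENNReal.toReal_mono ENNReal.ofReal_ne_top h1
      _ = ε' := ENNReal.toReal_ofReal hε'pos.le
    have c8 : tA ≤ tA' + ε' := by
      have h1 : μ A ≤ μ A' + μ (A \ A') := by
        calc μ A ≤ μ (A' ∪ (A \ A')) := measure_mono (fun x hx => by
          by_cases hx' : x ∈ A'
          · exact Or.inl hx'
          · exact Or.inr ⟨hx, hx'⟩)
        _ ≤ μ A' + μ (A \ A') := measure_union_le _ _
      calc tA ≤ (μ A' + μ (A \ A')).toReal := by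
            exact ENNReal.toReal_mono
              (ENNReal.add_ne_top.mpr ⟨measure_ne_top μ _, measure_ne_top μ _⟩) h1
      _ = tA' + (μ (A \ A')).toReal := by
            exact ENNReal.toReal_add (measure_ne_top μ _) (measure_ne_top μ _)
      _ ≤ tA' + ε' := by linarith
    -- mean ergodic estimate for A'
    obtain ⟨N, hNpos, hmet⟩ := met_estimate herg hA'meas hε'pos
    -- eventual facts
    have hev1 : ∀ᶠ k in atTop, m ≤ φ k :=
      (eventually_ge_atTop m).mono fun k hk => le_trans hk hφ.le_apply
    have hev2 : ∀ᶠ k : ℕ in atTop, 1 / ((k : ℝ) + 1) ≤ ε' := by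
      have h1 : Tendsto (fun k : ℕ => 1 / ((k : ℝ) + 1)) atTop (nhds 0) :=
        tendsto_one_div_add_atTop_nhds_zero_nat
      exact (h1.eventually_lt_const hε'pos).mono fun k hk => hk.le
    have hev3 : ∀ᶠ k in atTop, (N : ℝ) * (μ (K.P (φ k)).base).toReal ≤ ε' := by
      have h1 : Tendsto (fun k => μ (K.P (φ k)).base) atTop (nhds 0) :=
        K.kr3.comp hφ.tendsto_atTop
      have h2 : Tendsto (fun k => (μ (K.P (φ k)).base).toReal) atTop (nhds 0) := by
        have := (ENNReal.tendsto_toReal ENNReal.zero_ne_top).comp h1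
        simpa [Function.comp_def] using this
      have h3 : Tendsto (fun k => (N : ℝ) * (μ (K.P (φ k)).base).toReal) atTop (nhds 0) := by
        simpa using h2.const_mul (N : ℝ)
      exact (h3.eventually_lt_const hε'pos).mono fun k hk => hk.le
    filter_upwards [hev1, hev2, hev3] with k h1 h2 h3
    -- notation for this k
    set sk := (K.P (φ k)).wordSum (w (φ k)) with hsk
    set Ek := (K.P (φ k)).wordTower (w (φ k)) with hEk
    have hEkmeas : MeasurableSet Ek := KRPartition.meas_wordTower hGI _
    set tEk := (μ Ek).toReal with htEk
    set rk := (μ (A ∩ T^[sk] ⁻¹' A)).toReal with hrk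
    set r' := (μ (A' ∩ T^[sk] ⁻¹' A')).toReal with hr'
    set βk := (μ (K.P (φ k)).base).toReal with hβk
    have hβknn : 0 ≤ βk := ENNReal.toReal_nonneg
    -- c7 : tower is large
    have c7 : γ - ε' < tEk := by
      have := hbound k
      linarith
    -- average bound via key estimate
    have havg : (N : ℝ)⁻¹ * ∑ i ∈ Finset.range N, (μ (T^[i] ⁻¹' A' ∩ Ek)).toReal ≤
        r' + N * βk := by
      have hterm : ∀ i ∈ Finset.range N, (μ (T^[i] ⁻¹' A' ∩ Ek)).toReal ≤ r' + N * βk := by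
        intro i hi
        have h41 := KRSequence.key_estimate hGI (K := K) h1 S (hw (φ k)) i
        have h42 : (μ (T^[i] ⁻¹' A' ∩ Ek)).toReal ≤
            r' + (i : ℝ) * βk := by
          calc (μ (T^[i] ⁻¹' A' ∩ Ek)).toReal ≤
              (μ (A' ∩ T^[sk] ⁻¹' A') + (i : ENNReal) * μ (K.P (φ k)).base).toReal :=
                ENNReal.toReal_mono
                  (ENNReal.add_ne_top.mpr ⟨measure_ne_top μ _,
                    ENNReal.mul_ne_top (ENNReal.natCast_ne_top i) (measure_ne_top μ _)⟩) h41
          _ = r' + (i : ℝ) * βk := by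
              rw [ENNReal.toReal_add (measure_ne_top μ _)
                (ENNReal.mul_ne_top (ENNReal.natCast_ne_top i) (measure_ne_top μ _)),
                ENNReal.toReal_mul, ENNReal.toReal_natCast]
        have hiN : (i : ℝ) ≤ N := by
          exact_mod_cast (Finset.mem_range.mp hi).le
        nlinarith
      have hsum : ∑ i ∈ Finset.range N, (μ (T^[i] ⁻¹' A' ∩ Ek)).toReal ≤
          N * (r' + N * βk) := by
        calc ∑ i ∈ Finset.range N, (μ (T^[i] ⁻¹' A' ∩ Ek)).toReal ≤
            (Finset.range N).card • (r' + N * βk) := Finset.sum_le_card_nsmul _ _ _ hterm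
        _ = N * (r' + N * βk) := by rw [Finset.card_range, nsmul_eq_mul]
      calc (N : ℝ)⁻¹ * ∑ i ∈ Finset.range N, (μ (T^[i] ⁻¹' A' ∩ Ek)).toReal ≤
          (N : ℝ)⁻¹ * (N * (r' + N * βk)) := by
            apply mul_le_mul_of_nonneg_left hsum
            positivity
      _ = r' + N * βk := by
            rw [← mul_assoc, inv_mul_cancel₀ (Nat.cast_ne_zero.mpr hNpos.ne'), one_mul]
    have c5 : tA' * tEk - ε' ≤ r' + N * βk := le_trans (hmet Ek hEkmeas) havg
    -- c6 : compare r' with rk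
    have c6 : r' ≤ rk + 2 * ε' := by
      have hsub : A' ∩ T^[sk] ⁻¹' A' ⊆
          (A ∩ T^[sk] ⁻¹' A) ∪ ((A' \ A) ∪ T^[sk] ⁻¹' (A' \ A)) := by
        rintro x ⟨hx1, hx2⟩
        by_cases hxA : x ∈ A
        · by_cases hxTA : T^[sk] x ∈ A
          · exact Or.inl ⟨hxA, hxTA⟩
          · exact Or.inr (Or.inr ⟨hx2, hxTA⟩)
        · exact Or.inr (Or.inl ⟨hx1, hxA⟩)
      have hpre : μ (T^[sk] ⁻¹' (A' \ A)) = μ (A' \ A) :=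
        (herg.toMeasurePreserving.iterate sk).measure_preimage
          (hA'meas.diff hA).nullMeasurableSet
      have h51 : μ (A' ∩ T^[sk] ⁻¹' A') ≤
          μ (A ∩ T^[sk] ⁻¹' A) + (μ (A' \ A) + μ (A' \ A)) := by
        calc μ (A' ∩ T^[sk] ⁻¹' A') ≤
            μ ((A ∩ T^[sk] ⁻¹' A) ∪ ((A' \ A) ∪ T^[sk] ⁻¹' (A' \ A))) := measure_mono hsub
        _ ≤ μ (A ∩ T^[sk] ⁻¹' A) + μ ((A' \ A) ∪ T^[sk] ⁻¹' (A' \ A)) := measure_union_le _ _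
        _ ≤ μ (A ∩ T^[sk] ⁻¹' A) + (μ (A' \ A) + μ (T^[sk] ⁻¹' (A' \ A))) := by
            exact add_le_add_right (measure_union_le _ _) _
        _ = μ (A ∩ T^[sk] ⁻¹' A) + (μ (A' \ A) + μ (A' \ A)) := by rw [hpre]
      have hne9 : μ (A ∩ T^[sk] ⁻¹' A) + (μ (A' \ A) + μ (A' \ A)) ≠ ⊤ :=
        ENNReal.add_ne_top.mpr ⟨measure_ne_top μ _,
          ENNReal.add_ne_top.mpr ⟨measure_ne_top μ _, measure_ne_top μ _⟩⟩
      calc r' ≤ (μ (A ∩ T^[sk] ⁻¹' A) + (μ (A' \ A) + μ (A' \ A))).toReal :=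
        ENNReal.toReal_mono hne9 h51
      _ = rk + ((μ (A' \ A)).toReal + (μ (A' \ A)).toReal) := by
          rw [ENNReal.toReal_add (measure_ne_top μ _)
            (ENNReal.add_ne_top.mpr ⟨measure_ne_top μ _, measure_ne_top μ _⟩),
            ENNReal.toReal_add (measure_ne_top μ _) (measure_ne_top μ _)]
      _ ≤ rk + 2 * ε' := by linarith
    -- bounds
    have btA : tA ≤ 1 := by
      rw [htA]
      exact ENNReal.toReal_le_of_le_ofReal one_pos.le (by simpa using prob_le_one)
    have btA' : tA' ≤ 1 := by
      rw [htA']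
      exact ENNReal.toReal_le_of_le_ofReal one_pos.le (by simpa using prob_le_one)
    have btEk : tEk ≤ 1 := by
      rw [htEk]
      exact ENNReal.toReal_le_of_le_ofReal one_pos.le (by simpa using prob_le_one)
    have ntA : 0 ≤ tA := ENNReal.toReal_nonneg
    have ntA' : 0 ≤ tA' := ENNReal.toReal_nonneg
    have ntEk : 0 ≤ tEk := ENNReal.toReal_nonneg
    have nrk : 0 ≤ rk := ENNReal.toReal_nonneg
    -- final real inequality
    have hreal : γ * tA - ε ≤ rk := by
      rcases le_or_gt γ ε' with hcase | hcase
      · have h81 : γ * tA ≤ γ := by nlinarith [hγ.1]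
        have h82 : ε' = ε / 6 := hε'def
        linarith
      · have q1 : tA' * (γ - ε') ≤ tA' * tEk :=
          mul_le_mul_of_nonneg_left c7.le ntA'
        have q2 : (tA - ε') * (γ - ε') ≤ tA' * (γ - ε') :=
          mul_le_mul_of_nonneg_right (by linarith) (by linarith)
        have q3 : γ * tA - 2 * ε' ≤ (tA - ε') * (γ - ε') := by
          nlinarith [hγ.2, hε'pos]
        have h82 : ε' = ε / 6 := hε'def
        linarith
    -- convert to ENNReal
    calc ENNReal.ofReal (γ * tA - ε) ≤ ENNReal.ofReal rk := ENNReal.ofReal_le_ofReal hreal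
    _ = μ (A ∩ T^[sk] ⁻¹' A) := ENNReal.ofReal_toReal (measure_ne_top μ _)
  -- conclude via liminf
  have hliminf : ∀ ε : ℝ, 0 < ε → ENNReal.ofReal (γ * tA - ε) ≤
      Filter.liminf (fun k => μ (A ∩ T^[(K.P (φ k)).wordSum (w (φ k))] ⁻¹' A)) atTop :=
    fun ε hε => Filter.le_liminf_of_le (h := (main ε hε).mono fun k hk => hk)
  have hgoal : ENNReal.ofReal (γ * tA) ≤
      Filter.liminf (fun k => μ (A ∩ T^[(K.P (φ k)).wordSum (w (φ k))] ⁻¹' A)) atTop := by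
    refine ENNReal.le_of_forall_pos_le_add fun ε hεpos hfin => ?_
    have h1 : ENNReal.ofReal (γ * tA) ≤
        ENNReal.ofReal (γ * tA - (ε : ℝ)) + ENNReal.ofReal (ε : ℝ) := by
      calc ENNReal.ofReal (γ * tA) = ENNReal.ofReal ((γ * tA - (ε : ℝ)) + (ε : ℝ)) := by
            ring_nf
      _ ≤ ENNReal.ofReal (γ * tA - (ε : ℝ)) + ENNReal.ofReal (ε : ℝ) := ENNReal.ofReal_add_le
    calc ENNReal.ofReal (γ * tA) ≤
        ENNReal.ofReal (γ * tA - (ε : ℝ)) + ENNReal.ofReal (ε : ℝ) := h1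
    _ ≤ Filter.liminf (fun k => μ (A ∩ T^[(K.P (φ k)).wordSum (w (φ k))] ⁻¹' A)) atTop
          + ENNReal.ofReal (ε : ℝ) := add_le_add_left (hliminf ε (by exact_mod_cast hεpos)) _
    _ = _ + ε := by rw [ENNReal.ofReal_coe_nnreal]
  show ENNReal.ofReal γ * μ A ≤
      Filter.liminf (fun k => μ (A ∩ T^[(K.P (φ k)).wordSum (w (φ k))] ⁻¹' A)) atTop
  calc ENNReal.ofReal γ * μ A = ENNReal.ofReal (γ * tA) := by
        rw [ENNReal.ofReal_mul hγ.1.le, htA, ENNReal.ofReal_toReal (measure_ne_top μ A)]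
  _ ≤ _ := hgoal
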